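/- Let (μ, W) be a matrix weight with all moments finite, and let (P_n) be a monic orthogonal family for (μ, W), given by coefficients C_{n,k} ∈ M_N(ℂ) for 0 ≤ k ≤ n with C_{n,n} = I, such that each squared norm H_n = ∫ P_n(x) W(x) P_n(x)* dμ(x) is positive definite. Then for every T ∈ 𝒜 and every n, the polynomials T P_n and P_n T coincide, i.e., T C_{n,k} = C_{n,k} T for all 0 ≤ k ≤ n. -/

import Mathlib

open Matrix MeasureTheory ComplexOrder

set_option maxRecDepth 8000

attribute [local instance] Matrix.normedAddCommGroup Matrix.normedSpace

/-- The evaluation at `x` of the matrix polynomial with coefficients `C 0, …, C n`. -/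
noncomputable def matrixPolyEval (N : ℕ) (C : ℕ → Matrix (Fin N) (Fin N) ℂ) (n : ℕ)
    (x : ℂ) : Matrix (Fin N) (Fin N) ℂ :=
  ∑ k ∈ Finset.range (n + 1), x ^ k • C k

namespace TCommAux

variable {N : ℕ}

abbrev Mat (N : ℕ) := Matrix (Fin N) (Fin N) ℂ

/-- Two-sided multiplication as a continuous real-linear map on matrices. -/
noncomputable def mulCLM (A B : Mat N) : Mat N →L[ℝ] Mat N :=
  LinearMap.toContinuousLinearMap
    { toFun := fun M => A * M * B
      map_add' := fun M₁ M₂ => by simp [mul_add, add_mul]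
      map_smul' := fun c M => by simp [mul_smul_comm, smul_mul_assoc] }

@[simp] lemma mulCLM_apply (A B M : Mat N) : mulCLM A B M = A * M * B := rfl

lemma eval_left (A : Mat N) (C : ℕ → Mat N) (n : ℕ) (x : ℂ) :
    matrixPolyEval N (fun k => A * C k) n x = A * matrixPolyEval N C n x := by
  simp [matrixPolyEval, Finset.mul_sum, mul_smul_comm]

lemma eval_right (A : Mat N) (C : ℕ → Mat N) (n : ℕ) (x : ℂ) :
    matrixPolyEval N (fun k => C k * A) n x = matrixPolyEval N C n x * A := by
  simp [matrixPolyEval, Finset.sum_mul, smul_mul_assoc]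

lemma eval_sub (C D : ℕ → Mat N) (n : ℕ) (x : ℂ) :
    matrixPolyEval N (fun k => C k - D k) n x
      = matrixPolyEval N C n x - matrixPolyEval N D n x := by
  simp [matrixPolyEval, smul_sub, Finset.sum_sub_distrib]

lemma integrable_eval_mul (μ : Measure ℝ) (W : ℝ → Mat N)
    (hmom : ∀ n : ℕ, @Integrable _ _ SeminormedAddGroup.toContinuousENorm _ _ (fun x : ℝ => (x : ℂ) ^ n • W x) μ)
    (C D : ℕ → Mat N) (n m : ℕ) :
    @Integrable _ _ SeminormedAddGroup.toContinuousENorm _ _ (fun x : ℝ =>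
      matrixPolyEval N C n (x : ℂ) * W x * (matrixPolyEval N D m (x : ℂ))ᴴ) μ := by
  have key : ∀ x : ℝ,
      matrixPolyEval N C n (x : ℂ) * W x * (matrixPolyEval N D m (x : ℂ))ᴴ
        = ∑ k ∈ Finset.range (n + 1), ∑ l ∈ Finset.range (m + 1),
            mulCLM (C k) ((D l)ᴴ) (((x : ℂ) ^ (k + l)) • W x) := by
    intro x
    have hconj : (matrixPolyEval N D m (x : ℂ))ᴴ
        = ∑ l ∈ Finset.range (m + 1), ((x : ℂ) ^ l) • (D l)ᴴ := by
      rw [matrixPolyEval, conjTranspose_sum]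
      refine Finset.sum_congr rfl fun l _ => ?_
      rw [conjTranspose_smul]
      congr 1
      simp [star_pow, Complex.star_def, Complex.conj_ofReal]
    rw [matrixPolyEval, hconj, Finset.sum_mul, Finset.sum_mul_sum]
    refine Finset.sum_congr rfl fun k _ => Finset.sum_congr rfl fun l _ => ?_
    rw [mulCLM_apply]
    simp only [smul_mul_assoc, mul_smul_comm, smul_smul, pow_add]
    rw [mul_comm ((x : ℂ) ^ l) ((x : ℂ) ^ k)]
  simp only [key]
  refine integrable_finset_sum _ fun k _ => integrable_finset_sum _ fun l _ => ?_
  exact (mulCLM (C k) ((D l)ᴴ)).integrable_comp (hmom (k + l))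

lemma integral_const_mul' (μ : Measure ℝ) (A : Mat N) (f : ℝ → Mat N)
    (hf : @Integrable _ _ SeminormedAddGroup.toContinuousENorm _ _ f μ) : (∫ x, A * f x ∂μ) = A * ∫ x, f x ∂μ := by
  have h : (∫ x, A * f x * 1 ∂μ) = A * (∫ x, f x ∂μ) * 1 := (mulCLM A 1).integral_comp_comm hf
  simpa using h

lemma integral_mul_const' (μ : Measure ℝ) (B : Mat N) (f : ℝ → Mat N)
    (hf : @Integrable _ _ SeminormedAddGroup.toContinuousENorm _ _ f μ) : (∫ x, f x * B ∂μ) = (∫ x, f x ∂μ) * B := by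
  have h : (∫ x, 1 * f x * B ∂μ) = 1 * (∫ x, f x ∂μ) * B := (mulCLM 1 B).integral_comp_comm hf
  simpa using h

lemma integrable_const_mul' (μ : Measure ℝ) (A : Mat N) (f : ℝ → Mat N)
    (hf : @Integrable _ _ SeminormedAddGroup.toContinuousENorm _ _ f μ) : @Integrable _ _ SeminormedAddGroup.toContinuousENorm _ _ (fun x => A * f x) μ := by
  have h : @Integrable _ _ SeminormedAddGroup.toContinuousENorm _ _ (fun x => A * f x * 1) μ :=
    (mulCLM A 1).integrable_comp hf
  simpa using h

lemma expand_in_basis (Pc : ℕ → ℕ → Mat N) (hmonic : ∀ j, Pc j j = 1) :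
    ∀ (m : ℕ) (D : ℕ → Mat N), ∃ A : ℕ → Mat N, ∀ x : ℂ,
      (∑ k ∈ Finset.range m, x ^ k • D k)
        = ∑ j ∈ Finset.range m, A j * matrixPolyEval N (Pc j) j x := by
  intro m
  induction m with
  | zero => exact fun D => ⟨0, by simp⟩
  | succ m ih =>
    intro D
    obtain ⟨A', hA'⟩ := ih (fun k => D k - D m * Pc m k)
    refine ⟨fun j => if j = m then D m else A' j, fun x => ?_⟩
    rw [Finset.sum_range_succ, Finset.sum_range_succ]
    have h1 : ∑ j ∈ Finset.range m,
        (if j = m then D m else A' j) * matrixPolyEval N (Pc j) j x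
        = ∑ j ∈ Finset.range m, A' j * matrixPolyEval N (Pc j) j x :=
      Finset.sum_congr rfl fun j hj => by rw [if_neg (Finset.mem_range.mp hj).ne]
    rw [h1, show (fun j => if j = m then D m else A' j) m = D m from if_pos rfl, ← hA']
    have h2 : D m * matrixPolyEval N (Pc m) m x
        = x ^ m • D m + ∑ k ∈ Finset.range m, x ^ k • (D m * Pc m k) := by
      rw [matrixPolyEval, Finset.mul_sum]
      rw [Finset.sum_congr rfl fun k _ => mul_smul_comm (x ^ k) (D m) (Pc m k)]
      rw [Finset.sum_range_succ, hmonic, mul_one, add_comm]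
    rw [h2]
    simp only [smul_sub, Finset.sum_sub_distrib]
    abel

lemma coeffs_eq_zero (m : ℕ) (D : ℕ → Mat N)
    (h : ∀ x : ℂ, ∑ k ∈ Finset.range m, x ^ k • D k = 0) :
    ∀ k < m, D k = 0 := by
  intro k hk
  ext i j
  have hp : (∑ kk ∈ Finset.range m, Polynomial.C (D kk i j) * Polynomial.X ^ kk)
      = (0 : Polynomial ℂ) := by
    apply Polynomial.funext
    intro x
    have h1 := congrFun (congrFun (h x) i) j
    rw [Matrix.sum_apply] at h1
    rw [Polynomial.eval_finset_sum]
    simp only [Polynomial.eval_mul, Polynomial.eval_C, Polynomial.eval_pow,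
      Polynomial.eval_X, Polynomial.eval_zero]
    rw [Finset.sum_congr rfl fun kk _ => mul_comm (D kk i j) (x ^ kk)]
    have h2 : ∀ kk ∈ Finset.range m, (x ^ kk • D kk) i j = x ^ kk * D kk i j :=
      fun kk _ => rfl
    rw [Finset.sum_congr rfl h2] at h1
    exact h1
  have h2 := congrArg (fun p => Polynomial.coeff p k) hp
  simp only [Polynomial.finset_sum_coeff, Polynomial.coeff_C_mul, Polynomial.coeff_X_pow,
    Polynomial.coeff_zero, mul_ite, mul_one, mul_zero] at h2
  rw [Finset.sum_ite_eq (Finset.range m) k (fun kk => D kk i j)] at h2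
  simpa [Finset.mem_range.mpr hk] using h2

end TCommAux

open TCommAux

/-- For a matrix weight with all moments finite and a monic orthogonal family `(P_n)`
with positive definite squared norms, every `T ∈ 𝒜` satisfies `T P_n = P_n T`,
i.e. `T` commutes with all coefficients of `P_n`. -/
theorem T_commutes_with_monic_orthogonal_polynomials (N : ℕ) (hN : 1 ≤ N)
    (μ : Measure ℝ) [SigmaFinite μ]
    (W : ℝ → Matrix (Fin N) (Fin N) ℂ)
    (hWmeas : ∀ i j, Measurable fun x => W x i j)
    (hWpos : ∀ᵐ x ∂μ, (W x).PosDef)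
    (hmom : ∀ n : ℕ, @Integrable _ _ SeminormedAddGroup.toContinuousENorm _ _
      (fun x : ℝ => (x : ℂ) ^ n • W x) μ)
    (Pc : ℕ → ℕ → Matrix (Fin N) (Fin N) ℂ)
    (hmonic : ∀ n, Pc n n = 1)
    (horth : ∀ n m, n ≠ m →
      (∫ x : ℝ, matrixPolyEval N (Pc n) n (x : ℂ) * W x *
        (matrixPolyEval N (Pc m) m (x : ℂ))ᴴ ∂μ) = 0)
    (hHpos : ∀ n, (∫ x : ℝ, matrixPolyEval N (Pc n) n (x : ℂ) * W x *
        (matrixPolyEval N (Pc n) n (x : ℂ))ᴴ ∂μ).PosDef)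
    (T : Matrix (Fin N) (Fin N) ℂ)
    (hT : ∀ᵐ x ∂μ, T * W x = W x * Tᴴ) :
    ∀ n, ∀ k ≤ n, T * Pc n k = Pc n k * T := by
  intro n
  induction n using Nat.strong_induction_on with
  | _ n ih =>
  set D : ℕ → Mat N := fun k => T * Pc n k - Pc n k * T with hD
  suffices hzero : ∀ k ≤ n, D k = 0 by
    intro k hk
    have := hzero k hk
    rw [hD] at this
    simpa [sub_eq_zero] using this
  have hDn : D n = 0 := by simp [hD, hmonic]
  obtain ⟨A, hA⟩ := expand_in_basis Pc hmonic n D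
  -- the "remainder" polynomial equals T P_n - P_n T
  have hRform : ∀ x : ℂ, (∑ k ∈ Finset.range n, x ^ k • D k)
      = T * matrixPolyEval N (Pc n) n x - matrixPolyEval N (Pc n) n x * T := by
    intro x
    have e : (∑ k ∈ Finset.range n, x ^ k • D k)
        = matrixPolyEval N D n x := by
      rw [matrixPolyEval, Finset.sum_range_succ, hDn]
      simp
    rw [e, hD]
    rw [show (fun k => T * Pc n k - Pc n k * T)
        = fun k => (fun k => T * Pc n k) k - (fun k => Pc n k * T) k from rfl,
      eval_sub, eval_left, eval_right]
  -- T commutes with lower-degree polynomials by induction hypothesis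
  have hIH : ∀ i < n, ∀ x : ℂ, matrixPolyEval N (Pc i) i x * T
      = T * matrixPolyEval N (Pc i) i x := by
    intro i hi x
    rw [← eval_right, ← eval_left]
    refine Finset.sum_congr rfl fun k hk => ?_
    show x ^ k • (Pc i k * T) = x ^ k • (T * Pc i k)
    rw [ih i hi k (Nat.lt_succ_iff.mp (Finset.mem_range.mp hk))]
  -- all expansion coefficients vanish
  have hA0 : ∀ i ∈ Finset.range n, A i = 0 := by
    intro i hi'
    have hi : i < n := Finset.mem_range.mp hi'
    have hint : ∀ (C : ℕ → Mat N) (j : ℕ),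
        @Integrable _ _ SeminormedAddGroup.toContinuousENorm _ _ (fun x : ℝ => matrixPolyEval N C j (x : ℂ) * W x *
          (matrixPolyEval N (Pc i) i (x : ℂ))ᴴ) μ :=
      fun C j => integrable_eval_mul μ W hmom C (Pc i) j i
    -- the pairing of the remainder with P_i, computed via the expansion
    have e1 : (∫ x : ℝ, (∑ j ∈ Finset.range n, A j * matrixPolyEval N (Pc j) j (x : ℂ))
          * W x * (matrixPolyEval N (Pc i) i (x : ℂ))ᴴ ∂μ)
        = A i * (∫ x : ℝ, matrixPolyEval N (Pc i) i (x : ℂ) * W x *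
            (matrixPolyEval N (Pc i) i (x : ℂ))ᴴ ∂μ) := by
      have eq1 : ∀ x : ℝ, (∑ j ∈ Finset.range n, A j * matrixPolyEval N (Pc j) j (x : ℂ))
            * W x * (matrixPolyEval N (Pc i) i (x : ℂ))ᴴ
          = ∑ j ∈ Finset.range n, A j * (matrixPolyEval N (Pc j) j (x : ℂ) * W x *
              (matrixPolyEval N (Pc i) i (x : ℂ))ᴴ) := by
        intro x
        rw [Finset.sum_mul, Finset.sum_mul]
        exact Finset.sum_congr rfl fun j _ => by simp only [mul_assoc]
      simp only [eq1]
      rw [integral_finset_sum _ (fun j _ => integrable_const_mul' μ (A j) _ (hint (Pc j) j))]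
      have eq2 : ∀ j ∈ Finset.range n,
          (∫ x : ℝ, A j * (matrixPolyEval N (Pc j) j (x : ℂ) * W x *
            (matrixPolyEval N (Pc i) i (x : ℂ))ᴴ) ∂μ)
          = A j * (∫ x : ℝ, matrixPolyEval N (Pc j) j (x : ℂ) * W x *
              (matrixPolyEval N (Pc i) i (x : ℂ))ᴴ ∂μ) :=
        fun j _ => integral_const_mul' μ (A j) _ (hint (Pc j) j)
      rw [Finset.sum_congr rfl eq2]
      rw [Finset.sum_eq_single i]
      · intro j _ hji
        rw [horth j i hji, mul_zero]
      · intro hni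
        exact absurd hi' hni
    -- the same pairing computed via orthogonality and the A-module structure
    have e2 : (∫ x : ℝ, (∑ j ∈ Finset.range n, A j * matrixPolyEval N (Pc j) j (x : ℂ))
          * W x * (matrixPolyEval N (Pc i) i (x : ℂ))ᴴ ∂μ) = 0 := by
      have eq3 : ∀ x : ℝ, (∑ j ∈ Finset.range n, A j * matrixPolyEval N (Pc j) j (x : ℂ))
            * W x * (matrixPolyEval N (Pc i) i (x : ℂ))ᴴ
          = T * (matrixPolyEval N (Pc n) n (x : ℂ) * W x *
              (matrixPolyEval N (Pc i) i (x : ℂ))ᴴ)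
            - matrixPolyEval N (fun k => Pc n k * T) n (x : ℂ) * W x *
              (matrixPolyEval N (Pc i) i (x : ℂ))ᴴ := by
        intro x
        rw [← hA, hRform, eval_right]
        simp only [sub_mul, mul_assoc]
      simp only [eq3]
      rw [integral_sub (integrable_const_mul' μ T _ (hint (Pc n) n))
        (hint (fun k => Pc n k * T) n)]
      rw [integral_const_mul' μ T _ (hint (Pc n) n), horth n i (Nat.ne_of_gt hi), mul_zero]
      have eq4 : (fun x : ℝ => matrixPolyEval N (fun k => Pc n k * T) n (x : ℂ) * W x *
            (matrixPolyEval N (Pc i) i (x : ℂ))ᴴ)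
          =ᵐ[μ] fun x : ℝ => (matrixPolyEval N (Pc n) n (x : ℂ) * W x *
            (matrixPolyEval N (Pc i) i (x : ℂ))ᴴ) * Tᴴ := by
        filter_upwards [hT] with x hx
        rw [eval_right]
        have hTc : Tᴴ * (matrixPolyEval N (Pc i) i (x : ℂ))ᴴ
            = (matrixPolyEval N (Pc i) i (x : ℂ))ᴴ * Tᴴ := by
          rw [← conjTranspose_mul, hIH i hi, conjTranspose_mul]
        calc matrixPolyEval N (Pc n) n (x : ℂ) * T * W x *
              (matrixPolyEval N (Pc i) i (x : ℂ))ᴴ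
            = matrixPolyEval N (Pc n) n (x : ℂ) * (T * W x) *
              (matrixPolyEval N (Pc i) i (x : ℂ))ᴴ := by simp only [mul_assoc]
          _ = matrixPolyEval N (Pc n) n (x : ℂ) * (W x * Tᴴ) *
              (matrixPolyEval N (Pc i) i (x : ℂ))ᴴ := by rw [hx]
          _ = matrixPolyEval N (Pc n) n (x : ℂ) * W x *
              (Tᴴ * (matrixPolyEval N (Pc i) i (x : ℂ))ᴴ) := by simp only [mul_assoc]
          _ = matrixPolyEval N (Pc n) n (x : ℂ) * W x *
              ((matrixPolyEval N (Pc i) i (x : ℂ))ᴴ * Tᴴ) := by rw [hTc]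
          _ = matrixPolyEval N (Pc n) n (x : ℂ) * W x *
              (matrixPolyEval N (Pc i) i (x : ℂ))ᴴ * Tᴴ := by simp only [mul_assoc]
      rw [integral_congr_ae eq4, integral_mul_const' μ Tᴴ _ (hint (Pc n) n),
        horth n i (Nat.ne_of_gt hi), zero_mul, zero_sub, neg_zero]
    -- conclude A i = 0 from positive definiteness of H_i
    have hkey : A i * (∫ x : ℝ, matrixPolyEval N (Pc i) i (x : ℂ) * W x *
        (matrixPolyEval N (Pc i) i (x : ℂ))ᴴ ∂μ) = 0 := by rw [← e1, e2]
    set H := ∫ x : ℝ, matrixPolyEval N (Pc i) i (x : ℂ) * W x *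
        (matrixPolyEval N (Pc i) i (x : ℂ))ᴴ ∂μ with hH
    have hdet : IsUnit H.det := isUnit_iff_ne_zero.mpr (hHpos i).det_pos.ne'
    calc A i = A i * (H * H⁻¹) := by rw [Matrix.mul_nonsing_inv H hdet, mul_one]
      _ = (A i * H) * H⁻¹ := by rw [mul_assoc]
      _ = 0 := by rw [hkey, zero_mul]
  -- conclude all coefficients of the remainder vanish
  have hDzero : ∀ k < n, D k = 0 := by
    apply coeffs_eq_zero
    intro x
    rw [hA x]
    exact Finset.sum_eq_zero fun j hj => by rw [hA0 j hj, zero_mul]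
  intro k hk
  rcases Nat.lt_or_ge k n with h | h
  · exact hDzero k h
  · have : k = n := le_antisymm hk h
    rw [this]; exact hDn
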